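/- Let f : ℂ^n → ℂ and Θ : ℂ^n → ℂ^n be analytic. Then the divergence of the lifted vector field Θ_u satisfies, at every point (u,v,x) ∈ ℂ^{2+n}: tr(D(Θ_u)_{(u,v,x)}) = v · tr(DΘ_x). In particular, if Θ is divergence-free on ℂ^n, then Θ_u is divergence-free on ℂ^{2+n}. -/

import Mathlib

set_option synthInstance.maxHeartbeats 1000000
set_option maxHeartbeats 1000000

open Metric Complex

-- Step 1: Cauchy estimate for fderiv
lemma bound_fderiv {E : Type*} [NormedAddCommGroup E] [NormedSpace ℂ E]
    (f : E → ℂ) (hf : Differentiable ℂ f) (x₀ : E) (r M : ℝ) (hM0 : 0 ≤ M)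
    (hM : ∀ z ∈ closedBall x₀ (r + 1), ‖f z‖ ≤ M) :
    ∀ y ∈ closedBall x₀ r, ‖fderiv ℂ f y‖ ≤ M := by
  intro y hy
  apply ContinuousLinearMap.opNorm_le_bound _ hM0
  intro w
  rcases eq_or_ne w 0 with rfl | hw
  · simp
  have hwpos : (0:ℝ) < ‖w‖ := norm_pos_iff.2 hw
  have hder : HasDerivAt (fun z : ℂ => f (y + z • w)) (fderiv ℂ f y w) 0 := by
    have h1 : HasDerivAt (fun z : ℂ => y + z • w) w 0 := by
      simpa using ((hasDerivAt_id (0:ℂ)).smul_const w).const_add y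
    have := (hf (y + (0:ℂ) • w)).hasFDerivAt.comp_hasDerivAt 0 h1
    simpa [Function.comp_def] using this
  have hphi : Differentiable ℂ (fun z : ℂ => f (y + z • w)) :=
    hf.comp ((differentiable_const y).add (differentiable_id.smul_const w))
  have hR : (0:ℝ) < ‖w‖⁻¹ := by positivity
  have key := Complex.norm_deriv_le_of_forall_mem_sphere_norm_le (c := 0) hR
    hphi.diffContOnCl (C := M) ?_
  · rw [hder.deriv] at key
    calc ‖fderiv ℂ f y w‖ ≤ M / ‖w‖⁻¹ := key
    _ = M * ‖w‖ := by field_simp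
  intro z hz
  apply hM
  simp only [mem_sphere_iff_norm, sub_zero] at hz
  rw [mem_closedBall, dist_eq_norm]
  have h2 : y + z • w - x₀ = (y - x₀) + z • w := by abel
  rw [mem_closedBall, dist_eq_norm] at hy
  have h3 : ‖z • w‖ = 1 := by
    rw [norm_smul, hz]; field_simp
  calc ‖y + z • w - x₀‖ ≤ ‖y - x₀‖ + ‖z • w‖ := by rw [h2]; exact norm_add_le _ _
  _ ≤ r + 1 := by rw [h3]; linarith

-- Step 2: joint differentiability of the directional derivative, via Cauchy integral formula
lemma diff_dirderiv (n : ℕ) (f : (Fin n → ℂ) → ℂ) (hf : Differentiable ℂ f) (w : Fin n → ℂ) :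
    Differentiable ℂ (fun x => fderiv ℂ f x w) := by
  have hz0 : ∀ θ : ℝ, circleMap 0 1 θ ≠ 0 := fun θ => circleMap_ne_center one_ne_zero
  set F : (Fin n → ℂ) → ℝ → ℂ := fun x θ =>
    deriv (circleMap 0 1) θ • ((circleMap 0 1 θ) ^ (-2 : ℤ) • f (x + circleMap 0 1 θ • w))
    with hF
  have key : ∀ x, fderiv ℂ f x w = (2 * Real.pi * I : ℂ)⁻¹ • ∫ θ in (0:ℝ)..(2*Real.pi), F x θ := by
    intro x
    have hder : HasDerivAt (fun z : ℂ => f (x + z • w)) (fderiv ℂ f x w) 0 := by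
      have h1 : HasDerivAt (fun z : ℂ => x + z • w) w 0 := by
        simpa using ((hasDerivAt_id (0:ℂ)).smul_const w).const_add x
      have := (hf (x + (0:ℂ) • w)).hasFDerivAt.comp_hasDerivAt 0 h1
      simpa [Function.comp_def] using this
    have hphi : Differentiable ℂ (fun z : ℂ => f (x + z • w)) :=
      hf.comp ((differentiable_fun_id.smul_const w).const_add x)
    have hcau := DiffContOnCl.deriv_eq_smul_circleIntegral (c := 0)
      (f := fun z : ℂ => f (x + z • w)) zero_lt_one hphi.diffContOnCl
    rw [hder.deriv] at hcau
    rw [eq_inv_smul_iff₀ (by simp [Real.pi_ne_zero, I_ne_zero]), ← hcau]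
    unfold circleIntegral
    simp only [sub_zero, hF, one_div, zpow_neg, zpow_ofNat]
  have hcont : ∀ x, Continuous (fun θ => F x θ) := by
    intro x
    show Continuous fun θ => deriv (circleMap 0 1) θ • ((circleMap 0 1 θ) ^ (-2 : ℤ) • f (x + circleMap 0 1 θ • w))
    apply Continuous.fun_smul
    · exact ((continuous_circleMap 0 1).mul continuous_const).congr
        fun θ => (deriv_circleMap 0 1 θ).symm
    apply Continuous.fun_smul
    · exact (continuous_circleMap 0 1).zpow₀ (-2) (fun θ => Or.inl (hz0 θ))
    · exact hf.continuous.comp (continuous_const.add ((continuous_circleMap 0 1).smul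
        continuous_const))
  rw [funext key]
  intro x₀
  obtain ⟨M, hMb⟩ := (isCompact_closedBall x₀ ((1 + ‖w‖) + 1)).exists_bound_of_continuousOn
    hf.continuous.continuousOn
  set M' := max M 0 with hM'
  have hM'0 : 0 ≤ M' := le_max_right _ _
  have hDb : ∀ y ∈ Metric.closedBall x₀ (1 + ‖w‖), ‖fderiv ℂ f y‖ ≤ M' :=
    bound_fderiv f hf x₀ (1 + ‖w‖) M' hM'0 (fun z hz => (hMb z hz).trans (le_max_left _ _))
  set F' : (Fin n → ℂ) → ℝ → (Fin n → ℂ) →L[ℂ] ℂ := fun x θ =>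
    deriv (circleMap 0 1) θ •
      ((circleMap 0 1 θ) ^ (-2 : ℤ) • fderiv ℂ f (x + circleMap 0 1 θ • w)) with hF'
  have hmemb : ∀ (θ : ℝ), ∀ x ∈ Metric.ball x₀ 1,
      x + circleMap 0 1 θ • w ∈ Metric.closedBall x₀ (1 + ‖w‖) := by
    intro θ x hx
    rw [Metric.mem_closedBall, dist_eq_norm]
    have h2 : x + circleMap 0 1 θ • w - x₀ = (x - x₀) + circleMap 0 1 θ • w := by abel
    rw [Metric.mem_ball, dist_eq_norm] at hx
    have h3 : ‖circleMap 0 1 θ • w‖ ≤ ‖w‖ := by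
      rw [norm_smul]
      have h4 : ‖circleMap 0 1 θ‖ = 1 := by
        simpa using abs_circleMap_zero 1 θ
      simp [h4]
    calc ‖x + circleMap 0 1 θ • w - x₀‖ ≤ ‖x - x₀‖ + ‖circleMap 0 1 θ • w‖ := by
          rw [h2]; exact norm_add_le _ _
    _ ≤ 1 + ‖w‖ := by linarith [hx.le]
  have hdiff : ∀ (θ : ℝ), ∀ x, HasFDerivAt (fun x => F x θ) (F' x θ) x := by
    intro θ x
    have h1 : HasFDerivAt (fun x : Fin n → ℂ => f (x + circleMap 0 1 θ • w))
        (fderiv ℂ f (x + circleMap 0 1 θ • w)) x := by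
      have h2 : HasFDerivAt (fun x : Fin n → ℂ => x + circleMap 0 1 θ • w)
          (ContinuousLinearMap.id ℂ (Fin n → ℂ)) x := (hasFDerivAt_id x).add_const _
      have := ((hf _).hasFDerivAt).comp x h2
      exact this
    exact (h1.fun_const_smul _).fun_const_smul _
  have main := intervalIntegral.hasFDerivAt_integral_of_dominated_of_fderiv_le
    (F := F) (F' := F') (x₀ := x₀) (a := (0:ℝ)) (b := 2*Real.pi) (μ := MeasureTheory.volume)
    (bound := fun _ => M') (Metric.ball_mem_nhds x₀ zero_lt_one)
    (Filter.Eventually.of_forall (fun x => (hcont x).aestronglyMeasurable))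
    ((hcont x₀).intervalIntegrable _ _)
    ?_ ?_ (intervalIntegrable_const) ?_
  · exact (main.fun_const_smul _).differentiableAt
  · -- measurability of F' x₀
    rw [hF']
    apply MeasureTheory.AEStronglyMeasurable.fun_smul
    · exact ((continuous_circleMap 0 1).mul continuous_const).aestronglyMeasurable.congr
        (by filter_upwards with θ using (deriv_circleMap 0 1 θ).symm)
    apply MeasureTheory.AEStronglyMeasurable.fun_smul
    · exact ((continuous_circleMap 0 1).zpow₀ (-2) (fun θ => Or.inl (hz0 θ))).aestronglyMeasurable
    · refine Measurable.aestronglyMeasurable ?_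
      exact (measurable_fderiv ℂ f).comp
        ((continuous_const.add ((continuous_circleMap 0 1).smul continuous_const)).measurable)
  · -- bound
    filter_upwards with θ _ x hx
    show ‖deriv (circleMap 0 1) θ •
      ((circleMap 0 1 θ) ^ (-2 : ℤ) • fderiv ℂ f (x + circleMap 0 1 θ • w))‖ ≤ M'
    have h1 : ‖deriv (circleMap 0 1) θ‖ = 1 := by
      rw [deriv_circleMap]
      rw [norm_mul]
      have h4 : ‖circleMap 0 1 θ‖ = 1 := by simpa using abs_circleMap_zero 1 θ
      simp [h4]
    have h2 : ‖(circleMap 0 1 θ) ^ (-2 : ℤ)‖ = 1 := by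
      rw [norm_zpow]
      have h4 : ‖circleMap 0 1 θ‖ = 1 := by simpa using abs_circleMap_zero 1 θ
      simp [h4]
    calc ‖deriv (circleMap 0 1) θ •
        ((circleMap 0 1 θ) ^ (-2 : ℤ) • fderiv ℂ f (x + circleMap 0 1 θ • w))‖
        = ‖deriv (circleMap 0 1) θ‖ * ‖(circleMap 0 1 θ) ^ (-2 : ℤ) •
            fderiv ℂ f (x + circleMap 0 1 θ • w)‖ := norm_smul _ _
      _ = ‖deriv (circleMap 0 1) θ‖ * (‖(circleMap 0 1 θ) ^ (-2 : ℤ)‖ *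
            ‖fderiv ℂ f (x + circleMap 0 1 θ • w)‖) := by rw [norm_smul]
      _ ≤ M' := by rw [h1, h2, one_mul, one_mul]; exact hDb _ (hmemb θ x hx)
  · filter_upwards with θ _ x _
    exact hdiff θ x

-- Step 3: full differentiability of fderiv
lemma diff_fderiv (n : ℕ) (f : (Fin n → ℂ) → ℂ) (hf : Differentiable ℂ f) :
    Differentiable ℂ (fderiv ℂ f) := by
  have hrep : fderiv ℂ f = fun x => ∑ i : Fin n, (fderiv ℂ f x (Pi.single i 1)) •
      (ContinuousLinearMap.proj i : ((Fin n → ℂ)) →L[ℂ] ℂ) := by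
    funext x
    ext w
    rw [ContinuousLinearMap.sum_apply]
    simp only [ContinuousLinearMap.smul_apply, ContinuousLinearMap.proj_apply]
    have hw : w = ∑ i, w i • (Pi.single i 1 : Fin n → ℂ) := by
      funext j
      simp [Finset.sum_apply, Pi.single_apply, Finset.sum_ite_eq']
    conv_lhs => rw [hw]
    rw [map_sum]
    simp [smul_eq_mul, mul_comm]
  rw [hrep]
  apply Differentiable.fun_sum
  intro i _
  exact (diff_dirderiv n f hf _).smul_const _

-- trace splitting on a product
lemma trace_prod_split {M N : Type*} [AddCommGroup M] [Module ℂ M] [AddCommGroup N] [Module ℂ N]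
    [Module.Finite ℂ M] [Module.Free ℂ M] [Module.Finite ℂ N] [Module.Free ℂ N]
    (L : (M × N) →ₗ[ℂ] (M × N)) :
    LinearMap.trace ℂ (M × N) L =
      LinearMap.trace ℂ M ((LinearMap.fst ℂ M N) ∘ₗ (L ∘ₗ (LinearMap.inl ℂ M N))) +
      LinearMap.trace ℂ N ((LinearMap.snd ℂ M N) ∘ₗ (L ∘ₗ (LinearMap.inr ℂ M N))) := by
  have hL : L = ((LinearMap.inl ℂ M N) ∘ₗ ((LinearMap.fst ℂ M N) ∘ₗ L)) +
      ((LinearMap.inr ℂ M N) ∘ₗ ((LinearMap.snd ℂ M N) ∘ₗ L)) := by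
    apply LinearMap.ext
    intro p
    simp [LinearMap.add_apply]
  conv_lhs => rw [hL]
  rw [map_add,
    LinearMap.trace_comp_comm' ((LinearMap.fst ℂ M N) ∘ₗ L) (LinearMap.inl ℂ M N),
    LinearMap.trace_comp_comm' ((LinearMap.snd ℂ M N) ∘ₗ L) (LinearMap.inr ℂ M N),
    LinearMap.comp_assoc, LinearMap.comp_assoc]

/-- the divergence (trace of the Fréchet derivative) of the lifted field
`Θ_u (u,v,x) = (Df_x(Θ x), 0, v • Θ x)` satisfies `div Θ_u (u,v,x) = v * div Θ x`.
In particular, if `Θ` is divergence-free then so is `Θ_u`. -/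
theorem stmt_5 (n : ℕ) (f : (Fin n → ℂ) → ℂ) (Θ : (Fin n → ℂ) → (Fin n → ℂ))
    (hf : Differentiable ℂ f) (hΘ : Differentiable ℂ Θ)
    (Θu : ℂ × ℂ × (Fin n → ℂ) → ℂ × ℂ × (Fin n → ℂ))
    (hΘu : ∀ (u v : ℂ) (x : Fin n → ℂ), Θu (u, v, x) = (fderiv ℂ f x (Θ x), 0, v • Θ x)) :
    (∀ (u v : ℂ) (x : Fin n → ℂ),
      LinearMap.trace ℂ (ℂ × ℂ × (Fin n → ℂ)) (fderiv ℂ Θu (u, v, x)).toLinearMap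
        = v * LinearMap.trace ℂ (Fin n → ℂ) (fderiv ℂ Θ x).toLinearMap) ∧
    ((∀ x, LinearMap.trace ℂ (Fin n → ℂ) (fderiv ℂ Θ x).toLinearMap = 0) →
      ∀ p : ℂ × ℂ × (Fin n → ℂ),
        LinearMap.trace ℂ (ℂ × ℂ × (Fin n → ℂ)) (fderiv ℂ Θu p).toLinearMap = 0) := by
  have main : ∀ (u v : ℂ) (x : Fin n → ℂ),
      LinearMap.trace ℂ (ℂ × ℂ × (Fin n → ℂ)) (fderiv ℂ Θu (u, v, x)).toLinearMap
        = v * LinearMap.trace ℂ (Fin n → ℂ) (fderiv ℂ Θ x).toLinearMap := by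
    intro u v x
    set π : (ℂ × ℂ × (Fin n → ℂ)) →L[ℂ] (Fin n → ℂ) :=
      (ContinuousLinearMap.snd ℂ ℂ (Fin n → ℂ)).comp
        (ContinuousLinearMap.snd ℂ ℂ (ℂ × (Fin n → ℂ))) with hπ
    set σ : (ℂ × ℂ × (Fin n → ℂ)) →L[ℂ] ℂ :=
      (ContinuousLinearMap.fst ℂ ℂ (Fin n → ℂ)).comp
        (ContinuousLinearMap.snd ℂ ℂ (ℂ × (Fin n → ℂ))) with hσ
    have hTheta_eq : Θu = fun p : ℂ × ℂ × (Fin n → ℂ) =>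
        (fderiv ℂ f p.2.2 (Θ p.2.2), (0:ℂ), p.2.1 • Θ p.2.2) := by
      funext p
      exact hΘu p.1 p.2.1 p.2.2
    have hφ : DifferentiableAt ℂ (fun y : Fin n → ℂ => fderiv ℂ f y (Θ y)) x :=
      ((diff_fderiv n f hf) x).clm_apply (hΘ x)
    set A : (Fin n → ℂ) →L[ℂ] ℂ := fderiv ℂ (fun y => fderiv ℂ f y (Θ y)) x with hA
    have h1 : HasFDerivAt (fun p : ℂ × ℂ × (Fin n → ℂ) => fderiv ℂ f p.2.2 (Θ p.2.2))
        (A.comp π) (u, v, x) := by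
      have := hφ.hasFDerivAt.comp (u,v,x) (π.hasFDerivAt (x := (u,v,x)))
      exact this
    have h2 : HasFDerivAt (fun _ : ℂ × ℂ × (Fin n → ℂ) => (0:ℂ))
        (0 : (ℂ × ℂ × (Fin n → ℂ)) →L[ℂ] ℂ) (u,v,x) := hasFDerivAt_const _ _
    have h3 : HasFDerivAt (fun p : ℂ × ℂ × (Fin n → ℂ) => p.2.1 • Θ p.2.2)
        (v • ((fderiv ℂ Θ x).comp π) + σ.smulRight (Θ x)) (u,v,x) := by
      have hc : HasFDerivAt (fun p : ℂ × ℂ × (Fin n → ℂ) => p.2.1) σ (u,v,x) :=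
        σ.hasFDerivAt (x := (u,v,x))
      have hg : HasFDerivAt (fun p : ℂ × ℂ × (Fin n → ℂ) => Θ p.2.2)
          ((fderiv ℂ Θ x).comp π) (u,v,x) := by
        have := (hΘ x).hasFDerivAt.comp (u,v,x) (π.hasFDerivAt (x := (u,v,x)))
        exact this
      have := hc.smul hg
      simpa using this
    have hL : HasFDerivAt Θu ((A.comp π).prod
        ((0 : (ℂ × ℂ × (Fin n → ℂ)) →L[ℂ] ℂ).prod
          (v • ((fderiv ℂ Θ x).comp π) + σ.smulRight (Θ x)))) (u,v,x) := by
      rw [hTheta_eq]; exact h1.prodMk (h2.prodMk h3)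
    rw [hL.fderiv]
    rw [trace_prod_split]
    have e1 : (LinearMap.fst ℂ ℂ (ℂ × (Fin n → ℂ))) ∘ₗ
        (((A.comp π).prod ((0 : (ℂ × ℂ × (Fin n → ℂ)) →L[ℂ] ℂ).prod
          (v • ((fderiv ℂ Θ x).comp π) + σ.smulRight (Θ x)))).toLinearMap ∘ₗ
          LinearMap.inl ℂ ℂ (ℂ × (Fin n → ℂ))) = 0 := by
      apply LinearMap.ext
      intro a
      simp [hπ]
    rw [e1, map_zero, zero_add, trace_prod_split]
    have e2 : (LinearMap.fst ℂ ℂ (Fin n → ℂ)) ∘ₗ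
        (((LinearMap.snd ℂ ℂ (ℂ × (Fin n → ℂ))) ∘ₗ
          (((A.comp π).prod ((0 : (ℂ × ℂ × (Fin n → ℂ)) →L[ℂ] ℂ).prod
            (v • ((fderiv ℂ Θ x).comp π) + σ.smulRight (Θ x)))).toLinearMap ∘ₗ
            LinearMap.inr ℂ ℂ (ℂ × (Fin n → ℂ)))) ∘ₗ LinearMap.inl ℂ ℂ (Fin n → ℂ)) = 0 := by
      apply LinearMap.ext
      intro a
      simp
    have e3 : (LinearMap.snd ℂ ℂ (Fin n → ℂ)) ∘ₗ
        (((LinearMap.snd ℂ ℂ (ℂ × (Fin n → ℂ))) ∘ₗ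
          (((A.comp π).prod ((0 : (ℂ × ℂ × (Fin n → ℂ)) →L[ℂ] ℂ).prod
            (v • ((fderiv ℂ Θ x).comp π) + σ.smulRight (Θ x)))).toLinearMap ∘ₗ
            LinearMap.inr ℂ ℂ (ℂ × (Fin n → ℂ)))) ∘ₗ LinearMap.inr ℂ ℂ (Fin n → ℂ)) =
        v • (fderiv ℂ Θ x).toLinearMap := by
      apply LinearMap.ext
      intro c
      simp [hπ, hσ]
    rw [e2, map_zero, zero_add, e3, map_smul, smul_eq_mul]
  refine ⟨main, fun h p => ?_⟩
  have := main p.1 p.2.1 p.2.2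
  rw [h p.2.2, mul_zero] at this
  exact this
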